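/- Let D be a bounded domain and suppose u₁, u₂ are bounded continuous maximal functions in a cone C of subharmonic-type functions on D with the same boundary values: for every ξ ∈ ∂D \ K, lim_{z→ξ} u₁(z) = lim_{z→ξ} u₂(z) = φ(ξ). Assume there exists v ∈ C with v ≤ 0 on D, v > -∞ on D, and lim_{z→ξ} v(z) = -∞ for all ξ ∈ K. If maximality means that for every open U relatively compact in D and every w ∈ C with w ≤ u_i on D \ U one has w ≤ u_i on U, and C is closed under addition and under the gluing operation, then u₁ = u₂ on D. -/
import Mathlib


open Filter Topology Bornology Metric

lemma aux_one_side {n : ℕ} (D : Set (EuclideanSpace ℂ (Fin n)))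
    (hD_open : IsOpen D) (hD_bdd : IsBounded D)
    (K : Set (EuclideanSpace ℂ (Fin n))) (hK_sub : K ⊆ frontier D)
    (φ : EuclideanSpace ℂ (Fin n) → ℝ)
    (C : Set (EuclideanSpace ℂ (Fin n) → ℝ))
    (a b v : EuclideanSpace ℂ (Fin n) → ℝ)
    (hv_np : ∀ x ∈ D, v x ≤ 0)
    (hv_K : ∀ ξ ∈ K, Tendsto v (nhdsWithin ξ D) atBot)
    (hcomb : ∀ ε : ℝ, 0 < ε → (fun x => a x + ε * v x - ε) ∈ C)
    (ha_bdd : ∃ M : ℝ, ∀ x ∈ D, |a x| ≤ M)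
    (hb_bdd : ∃ M : ℝ, ∀ x ∈ D, |b x| ≤ M)
    (hmaxb : ∀ U : Set (EuclideanSpace ℂ (Fin n)), IsOpen U → closure U ⊆ D →
        IsCompact (closure U) →
        ∀ w ∈ C, (∀ x ∈ D \ U, w x ≤ b x) → ∀ x ∈ U, w x ≤ b x)
    (hbdry : ∀ ξ ∈ frontier D \ K,
      Tendsto a (nhdsWithin ξ D) (nhds (φ ξ)) ∧
      Tendsto b (nhdsWithin ξ D) (nhds (φ ξ))) :
    ∀ x ∈ D, a x ≤ b x := by
  obtain ⟨Ma, hMa⟩ := ha_bdd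
  obtain ⟨Mb, hMb⟩ := hb_bdd
  -- For each ε > 0, show w := a + ε v - ε ≤ b on D.
  have main : ∀ ε : ℝ, 0 < ε → ∀ x ∈ D, a x + ε * v x - ε ≤ b x := by
    intro ε hε
    set w : EuclideanSpace ℂ (Fin n) → ℝ := fun x => a x + ε * v x - ε with hw
    -- local boundary estimate
    have key : ∀ ξ ∈ frontier D, ∃ N : Set (EuclideanSpace ℂ (Fin n)),
        IsOpen N ∧ ξ ∈ N ∧ ∀ x ∈ N, x ∈ D → w x ≤ b x := by
      intro ξ hξ
      have hev : ∀ᶠ x in nhdsWithin ξ D, w x ≤ b x := by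
        by_cases hξK : ξ ∈ K
        · have h1 : ∀ᶠ x in nhdsWithin ξ D, v x ≤ (-(Ma + Mb)) / ε :=
            (hv_K ξ hξK).eventually (eventually_le_atBot _)
          have h2 : ∀ᶠ x in nhdsWithin ξ D, x ∈ D := eventually_mem_nhdsWithin
          filter_upwards [h1, h2] with x hx hxD
          have hax := hMa x hxD
          have hbx := hMb x hxD
          have : ε * v x ≤ -(Ma + Mb) := by
            calc ε * v x ≤ ε * ((-(Ma + Mb)) / ε) := by
                  exact mul_le_mul_of_nonneg_left hx hε.le
              _ = -(Ma + Mb) := by field_simp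
          have h3 : |a x| ≤ Ma := hax
          have h4 : |b x| ≤ Mb := hbx
          rw [abs_le] at h3 h4
          simp only [hw]
          linarith
        · obtain ⟨ha, hb⟩ := hbdry ξ ⟨hξ, hξK⟩
          have h0 : Tendsto (fun x => a x - b x) (nhdsWithin ξ D) (nhds 0) := by
            have := ha.sub hb
            simpa using this
          have h1 : ∀ᶠ x in nhdsWithin ξ D, a x - b x < ε :=
            h0.eventually_lt_const hε
          have h2 : ∀ᶠ x in nhdsWithin ξ D, x ∈ D := eventually_mem_nhdsWithin
          filter_upwards [h1, h2] with x hx hxD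
          have hvx : v x ≤ 0 := hv_np x hxD
          have : ε * v x ≤ 0 := mul_nonpos_of_nonneg_of_nonpos hε.le hvx
          simp only [hw]
          linarith
      rw [eventually_nhdsWithin_iff, _root_.eventually_nhds_iff] at hev
      obtain ⟨N, hN1, hN2, hN3⟩ := hev
      exact ⟨N, hN2, hN3, hN1⟩
    choose! N hNopen hNmem hNle using key
    have hfr_cpt : IsCompact (frontier D) :=
      isCompact_of_isClosed_isBounded isClosed_frontier
        (hD_bdd.closure.subset frontier_subset_closure)
    obtain ⟨t, ht⟩ := hfr_cpt.elim_finite_subcover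
      (fun ξ : frontier D => N ξ) (fun ξ => hNopen ξ ξ.2)
      (fun x hx => Set.mem_iUnion.2 ⟨⟨x, hx⟩, hNmem x hx⟩)
    set V : Set (EuclideanSpace ℂ (Fin n)) := ⋃ i ∈ t, N i with hV
    have hVopen : IsOpen V := isOpen_biUnion fun i _ => hNopen i i.2
    have hVle : ∀ x ∈ V, x ∈ D → w x ≤ b x := by
      intro x hx hxD
      obtain ⟨i, _, hxN⟩ := Set.mem_iUnion₂.1 hx
      exact hNle i i.2 x hxN hxD
    set F : Set (EuclideanSpace ℂ (Fin n)) := closure D \ V with hF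
    have hFclosed : IsClosed F := isClosed_closure.sdiff hVopen
    have hFcpt : IsCompact F :=
      isCompact_of_isClosed_isBounded hFclosed
        (hD_bdd.closure.subset Set.diff_subset)
    have hFD : F ⊆ D := by
      intro x hx
      by_contra hxD
      have : x ∈ frontier D := by
        rw [frontier, hD_open.interior_eq]
        exact ⟨hx.1, hxD⟩
      exact hx.2 (ht this)
    obtain ⟨δ, hδ, hδsub⟩ := hFcpt.exists_thickening_subset_open hD_open hFD
    set U : Set (EuclideanSpace ℂ (Fin n)) := thickening (δ / 2) F with hU
    have hUopen : IsOpen U := isOpen_thickening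
    have hclU : closure U ⊆ cthickening (δ / 2) F :=
      closure_thickening_subset_cthickening _ _
    have hclU2 : closure U ⊆ D :=
      fun x hx => hδsub (cthickening_subset_thickening' hδ (half_lt_self hδ) F (hclU hx))
    have hclUcpt : IsCompact (closure U) :=
      (hFcpt.cthickening).of_isClosed_subset isClosed_closure hclU
    have houtside : ∀ x ∈ D \ U, w x ≤ b x := by
      intro x ⟨hxD, hxU⟩
      have hxF : x ∉ F := fun hxF => hxU (self_subset_thickening (half_pos hδ) F hxF)
      have hxV : x ∈ V := by
        by_contra hxV
        exact hxF ⟨subset_closure hxD, hxV⟩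
      exact hVle x hxV hxD
    have hinside := hmaxb U hUopen hclU2 hclUcpt w (hcomb ε hε) houtside
    intro x hxD
    by_cases hxU : x ∈ U
    · exact hinside x hxU
    · exact houtside x ⟨hxD, hxU⟩
  -- let ε → 0
  intro x hxD
  have hvx : v x ≤ 0 := hv_np x hxD
  refine le_of_forall_pos_le_add ?_
  intro δ hδ
  have hpos : 0 < 1 - v x := by linarith
  have hε : 0 < δ / (1 - v x) := div_pos hδ hpos
  have := main _ hε x hxD
  have hne : (1 - v x) ≠ 0 := ne_of_gt hpos
  have heq : δ / (1 - v x) * v x - δ / (1 - v x) = -δ := by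
    field_simp
    ring
  nlinarith [this]

/-- Uniqueness of bounded continuous maximal functions with prescribed boundary values
off a compact exceptional set `K ⊂ ∂D`, given an auxiliary function `v ∈ C`, `v ≤ 0`,
finite on `D`, tending to `-∞` at every point of `K`. -/
theorem stmt_14 {n : ℕ} (D : Set (EuclideanSpace ℂ (Fin n)))
    (hD_open : IsOpen D) (hD_conn : IsConnected D) (hD_bdd : IsBounded D)
    (K : Set (EuclideanSpace ℂ (Fin n))) (hK_cpt : IsCompact K) (hK_sub : K ⊆ frontier D)
    (φ : EuclideanSpace ℂ (Fin n) → ℝ) (hφ : ContinuousOn φ (frontier D))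
    (C : Set (EuclideanSpace ℂ (Fin n) → ℝ))
    (hC_usc : ∀ u ∈ C, UpperSemicontinuousOn u D)
    (hC_add : ∀ u ∈ C, ∀ w ∈ C, u + w ∈ C)
    (hC_smul : ∀ u ∈ C, ∀ c : ℝ, 0 ≤ c → c • u ∈ C)
    (hC_const : ∀ u ∈ C, ∀ c : ℝ, (fun x => u x + c) ∈ C)
    (hC_max : ∀ u ∈ C, ∀ w ∈ C, (fun x => max (u x) (w x)) ∈ C)
    (u₁ u₂ v : EuclideanSpace ℂ (Fin n) → ℝ)
    (hu₁C : u₁ ∈ C) (hu₂C : u₂ ∈ C) (hvC : v ∈ C)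
    (hv_np : ∀ x ∈ D, v x ≤ 0)
    (hv_K : ∀ ξ ∈ K, Tendsto v (nhdsWithin ξ D) atBot)
    (hcomb : ∀ ε : ℝ, 0 < ε → (fun x => u₁ x + ε * v x - ε) ∈ C)
    (hu₁_bdd : ∃ M : ℝ, ∀ x ∈ D, |u₁ x| ≤ M)
    (hu₂_bdd : ∃ M : ℝ, ∀ x ∈ D, |u₂ x| ≤ M)
    (hu₁_cont : ContinuousOn u₁ D) (hu₂_cont : ContinuousOn u₂ D)
    (hmax : ∀ u ∈ ({u₁, u₂} : Set (EuclideanSpace ℂ (Fin n) → ℝ)),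
      ∀ U : Set (EuclideanSpace ℂ (Fin n)), IsOpen U → closure U ⊆ D →
        IsCompact (closure U) →
        ∀ w ∈ C, (∀ x ∈ D \ U, w x ≤ u x) → ∀ x ∈ U, w x ≤ u x)
    (hbdry : ∀ ξ ∈ frontier D \ K,
      Tendsto u₁ (nhdsWithin ξ D) (nhds (φ ξ)) ∧
      Tendsto u₂ (nhdsWithin ξ D) (nhds (φ ξ))) :
    Set.EqOn u₁ u₂ D := by
  have hcomb₂ : ∀ ε : ℝ, 0 < ε → (fun x => u₂ x + ε * v x - ε) ∈ C := by
    intro ε hε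
    have h1 : u₂ + ε • v ∈ C := hC_add u₂ hu₂C (ε • v) (hC_smul v hvC ε hε.le)
    have h2 := hC_const _ h1 (-ε)
    have heq : (fun x => (u₂ + ε • v) x + (-ε)) = fun x => u₂ x + ε * v x - ε := by
      funext x; simp [sub_eq_add_neg]
    rwa [heq] at h2
  have h12 : ∀ x ∈ D, u₁ x ≤ u₂ x :=
    aux_one_side D hD_open hD_bdd K hK_sub φ C u₁ u₂ v hv_np hv_K hcomb
      hu₁_bdd hu₂_bdd (hmax u₂ (Set.mem_insert_of_mem _ rfl)) hbdry
  have h21 : ∀ x ∈ D, u₂ x ≤ u₁ x :=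
    aux_one_side D hD_open hD_bdd K hK_sub φ C u₂ u₁ v hv_np hv_K hcomb₂
      hu₂_bdd hu₁_bdd (hmax u₁ (Set.mem_insert _ _))
      (fun ξ hξ => ⟨(hbdry ξ hξ).2, (hbdry ξ hξ).1⟩)
  intro x hx
  exact le_antisymm (h12 x hx) (h21 x hx)
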